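/- Let λ ≥ μ be infinite regular cardinals and κ ≥ λ. Suppose there exist functions (f_β)_{β<κ} from λ to μ such that every ultrafilter uniform over λ has some pushforward f_β(D) uniform over μ. Then the topological space μ^κ, where μ carries the topology whose open sets are exactly the intervals [0, α) for α ≤ μ and μ^κ carries the product topology, is not [λ, λ]-compact. -/

import Mathlib

open Cardinal Set

/-- An ultrafilter over a cardinal `l` (realized as `l.ord.ToType`) is *uniform*
if every member has cardinality `l`. -/
def IsUniformUltrafilter (l : Cardinal) (D : Ultrafilter l.ord.ToType) : Prop :=
  ∀ s ∈ D, #s = l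

/-- The topology on `μ` whose open sets are exactly the intervals `[0, α)`
for `α ≤ μ` (the whole space and the empty set included). -/
def intervalTopology (m : Cardinal) : TopologicalSpace m.ord.ToType :=
  .generateFrom {s | (∃ α : m.ord.ToType, s = Set.Iio α) ∨ s = Set.univ}

/-- A space is `[λ, λ]`-compact iff every open cover by at most `λ` sets has a
subcover by fewer than `λ` sets. -/
def IsLLCompact (l : Cardinal) (X : Type*) [TopologicalSpace X] : Prop :=
  ∀ 𝒰 : Set (Set X), (∀ u ∈ 𝒰, IsOpen u) → ⋃₀ 𝒰 = Set.univ → #𝒰 ≤ l →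
    ∃ 𝒱 ⊆ 𝒰, #𝒱 < l ∧ ⋃₀ 𝒱 = Set.univ

/-- Abstract core: if `L` is a linear order of cardinality `l` in which every
small set is bounded, `M` is a topological linear order in which every point
has an open "small" interval above it, and every `l`-uniform ultrafilter on `L`
pushes forward under some `f β` to an `m`-uniform ultrafilter on `M`, then
`M ^ ι` is not `[l, l]`-compact. -/
theorem stmt11_aux {M L ι : Type u} [LinearOrder L] [Nonempty L] [Preorder M]
    [TopologicalSpace M]
    (l m : Cardinal) (hLcard : #L = l)
    (boundedL : ∀ S : Set L, #S < l → ∃ δ : L, ∀ a ∈ S, a < δ)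
    (hIioL : ∀ δ : L, #(Iio δ) < l)
    (hIioM : ∀ p : M, ∃ q, p < q ∧ IsOpen (Iio q) ∧ #(Iio q) ≠ m)
    (f : ι → L → M)
    (h : ∀ D : Ultrafilter L, (∀ s ∈ D, #s = l) →
      ∃ β : ι, ∀ t ∈ Ultrafilter.map (f β) D, #t = m) :
    ¬ IsLLCompact l (ι → M) := by
  intro hc
  set x : L → (ι → M) := fun α β => f β α with hx
  -- Step 1: the sequence `x` has a complete accumulation point
  have key : ∃ y : ι → M, ∀ U : Set (ι → M), IsOpen U → y ∈ U → #{α | x α ∈ U} = l := by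
    by_contra hno
    push_neg at hno
    choose U hUopen hyU hUcard using hno
    have hsmall : ∀ y, #{α | x α ∈ U y} < l := by
      intro y
      exact lt_of_le_of_ne ((mk_set_le _).trans_eq hLcard) (hUcard y)
    choose g hg using fun y => boundedL _ (hsmall y)
    set W : L → Set (ι → M) := fun γ => ⋃ y ∈ {y | g y ≤ γ}, U y with hW
    obtain ⟨𝒱, h𝒱sub, h𝒱card, h𝒱cov⟩ := hc (range W)
      (by rintro _ ⟨γ, rfl⟩; exact isOpen_biUnion fun y _ => hUopen y)
      (by
        apply eq_univ_of_forall
        intro z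
        exact ⟨W (g z), mem_range_self _,
          mem_iUnion₂.2 ⟨z, show g z ≤ g z from le_rfl, hyU z⟩⟩)
      ((mk_range_le).trans_eq hLcard)
    have hch : ∀ v : 𝒱, ∃ γ, W γ = (v : Set (ι → M)) := fun v => h𝒱sub v.2
    choose T hT using hch
    have hTcard : #(range T) < l := lt_of_le_of_lt mk_range_le h𝒱card
    obtain ⟨δ, hδ⟩ := boundedL (range T) hTcard
    have hxδ : x δ ∈ ⋃₀ 𝒱 := h𝒱cov ▸ mem_univ _
    obtain ⟨v, hv, hxv⟩ := hxδ
    have hxv' : x δ ∈ W (T ⟨v, hv⟩) := by rw [hT ⟨v, hv⟩]; exact hxv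
    obtain ⟨y, hy1, hy2⟩ := mem_iUnion₂.1 hxv'
    have h1 : δ < g y := hg y δ hy2
    have h2 : T ⟨v, hv⟩ < δ := hδ _ (mem_range_self _)
    exact absurd (h1.trans_le (hy1.trans h2.le)) (lt_irrefl δ)
  obtain ⟨y, hy⟩ := key
  -- Step 2: build a uniform ultrafilter converging to `y` along `x`
  set F : Filter L := Filter.comap x (nhds y) ⊓ Filter.atTop with hF
  haveI : F.NeBot := by
    rw [hF, Filter.inf_neBot_iff]
    intro s hs t ht
    obtain ⟨A, hA, hsub⟩ := Filter.mem_comap.1 hs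
    obtain ⟨V, hVA, hVopen, hyV⟩ := mem_nhds_iff.1 hA
    obtain ⟨δ, hδ⟩ := Filter.mem_atTop_sets.1 ht
    have h1 : #{α | x α ∈ V} = l := hy V hVopen hyV
    have h2 : ¬ ({α | x α ∈ V} ⊆ Iio δ) := by
      intro hsub2
      have hle := mk_le_mk_of_subset hsub2
      rw [h1] at hle
      exact absurd hle (not_le.2 (hIioL δ))
    obtain ⟨α, hαV, hαδ⟩ := not_subset.1 h2
    exact ⟨α, hsub (mem_preimage.2 (hVA hαV)), hδ α (le_of_not_gt hαδ)⟩
  set D := Ultrafilter.of F with hDdef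
  have hD1 : ∀ U : Set (ι → M), IsOpen U → y ∈ U → x ⁻¹' U ∈ D := by
    intro U hU hyU
    exact Ultrafilter.of_le F (inf_le_left (a := Filter.comap x (nhds y))
      (Filter.preimage_mem_comap (hU.mem_nhds hyU)))
  have hDuniform : ∀ s ∈ D, #s = l := by
    intro s hs
    refine le_antisymm ((mk_set_le s).trans_eq hLcard) ?_
    by_contra hlt
    push_neg at hlt
    obtain ⟨δ, hδ⟩ := boundedL s hlt
    have hIci : sᶜ ∈ (Filter.atTop : Filter L) := Filter.mem_of_superset (Filter.Ici_mem_atTop δ)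
      (fun a ha has => absurd ha (not_le.2 (hδ a has)))
    have : sᶜ ∈ D := Ultrafilter.of_le F (inf_le_right (b := (Filter.atTop : Filter L)) hIci)
    exact (Ultrafilter.compl_mem_iff_notMem.1 this) hs
  -- Step 3: contradiction with the uniform pushforward
  obtain ⟨β, hβ⟩ := h D hDuniform
  obtain ⟨q, hq, hqopen, hqcard⟩ := hIioM (y β)
  have hmem : Iio q ∈ Ultrafilter.map (f β) D := by
    rw [Ultrafilter.mem_map]
    have heq : (f β) ⁻¹' (Iio q) = x ⁻¹' ((fun z : ι → M => z β) ⁻¹' Iio q) := rfl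
    rw [heq]
    exact hD1 _ ((continuous_apply β).isOpen_preimage _ hqopen) hq
  exact hqcard (hβ _ hmem)

/-- If `κ ≥ λ ≥ μ` (all as indicated, `λ, μ` infinite regular)
and there are functions `f_β : λ → μ` (`β < κ`) such that every uniform
ultrafilter over `λ` has some pushforward uniform over `μ`, then `μ^κ` with
the interval topology on `μ` and the product topology is not
`[λ, λ]`-compact. -/
theorem stmt11 (l m : Cardinal) (hl : l.IsRegular) (hm : m.IsRegular) (hml : m ≤ l)
    {ι : Type*} (hk : l ≤ #ι)
    (f : ι → l.ord.ToType → m.ord.ToType)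
    (h : ∀ D : Ultrafilter l.ord.ToType, IsUniformUltrafilter l D →
      ∃ β : ι, ∀ t ∈ Ultrafilter.map (f β) D, #t = m) :
    ¬ @IsLLCompact l (ι → m.ord.ToType)
        (@Pi.topologicalSpace ι (fun _ => m.ord.ToType)
          (fun _ => intervalTopology m)) := by
  have hL : #(l.ord.ToType) = l := by rw [mk_toType, Cardinal.card_ord]
  haveI : Nonempty l.ord.ToType := Ordinal.toType_nonempty_iff_ne_zero.2 (by
    intro h0
    have : l = 0 := by rw [← Cardinal.card_ord l, h0, Ordinal.card_zero]
    exact hl.pos.ne' this)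
  haveI : NoMaxOrder m.ord.ToType := Cardinal.noMaxOrder hm.aleph0_le
  have boundedL : ∀ S : Set l.ord.ToType, #S < l → ∃ δ, ∀ a ∈ S, a < δ := by
    intro S hS
    by_contra hne
    push_neg at hne
    have hcof := Order.cof_le (s := S) (fun δ => hne δ)
    rw [Ordinal.cof_toType, hl.cof_eq] at hcof
    exact absurd hS (not_lt.2 hcof)
  have hIioM : ∀ p : m.ord.ToType, ∃ q, p < q ∧
      @IsOpen _ (intervalTopology m) (Iio q) ∧ #(Iio q) ≠ m := by
    intro p
    obtain ⟨q, hq⟩ := exists_gt p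
    refine ⟨q, hq, ?_, ne_of_lt (Cardinal.mk_Iio_ord_toType q)⟩
    exact TopologicalSpace.isOpen_generateFrom_of_mem
      (g := {s | (∃ α : m.ord.ToType, s = Set.Iio α) ∨ s = Set.univ}) (Or.inl ⟨q, rfl⟩)
  exact @stmt11_aux (m.ord.ToType) (l.ord.ToType) ι _ _ _ (intervalTopology m) l m hL
    boundedL (fun δ => Cardinal.mk_Iio_ord_toType δ) hIioM f h
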